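/- arXiv:2201.07659 — 4 statements merged into one kernel-verified Lean document; each statement's English description precedes it below -/
import Mathlib

section
/- Let δ : [0,∞) → ℝ and d : [0,∞) → ℝ be such that for every t ≥ 0 the function δ has (one-sided, within [0,∞)) derivative d(t) at t, δ(0) = 1, and δ is log sub-additive, i.e. δ(t+s) ≥ δ(t)·δ(s) for all s, t ≥ 0. Then d(t) ≥ δ(t)·d(0) for every t ≥ 0. (Lemma 2.3, first inequality.) -/
/-- Lemma 2.3, first inequality: if `δ` has one-sided derivative `d t` within `[0,∞)` at
every `t ≥ 0`, `δ 0 = 1`, and `δ` is log sub-additive, then `d t ≥ δ t * d 0` for `t ≥ 0`. -/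
theorem stmt_0 (δ d : ℝ → ℝ)
    (hderiv : ∀ t : ℝ, 0 ≤ t → HasDerivWithinAt δ (d t) (Set.Ici 0) t)
    (hδ0 : δ 0 = 1)
    (hsub : ∀ s t : ℝ, 0 ≤ s → 0 ≤ t → δ (t + s) ≥ δ t * δ s) :
    ∀ t : ℝ, 0 ≤ t → d t ≥ δ t * d 0 := by
  intro t ht
  set f : ℝ → ℝ := fun s => δ (t + s) - δ t * δ s with hf
  -- f has derivative d t - δ t * d 0 within Ici 0 at 0
  have h1 : HasDerivWithinAt (fun s : ℝ => δ (t + s)) (d t) (Set.Ici 0) 0 := by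
    have hinner : HasDerivWithinAt (fun s : ℝ => t + s) 1 (Set.Ici 0) 0 :=
      ((hasDerivAt_id 0).const_add t).hasDerivWithinAt
    have houter : HasDerivWithinAt δ (d t) (Set.Ici 0) (t + 0) := by
      simpa using hderiv t ht
    have := houter.comp 0 hinner (fun x hx => by
      simp only [Set.mem_Ici] at *
      linarith)
    rw [mul_one] at this; exact this
  have h2 : HasDerivWithinAt f (d t - δ t * d 0) (Set.Ici 0) 0 := by
    have := (hderiv 0 le_rfl).const_mul (δ t)
    exact h1.sub this
  -- slope of f at 0 is nonneg on (Ici 0) \ {0}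
  have hslope := hasDerivWithinAt_iff_tendsto_slope.mp h2
  rw [show Set.Ici (0:ℝ) \ {0} = Set.Ioi 0 from Set.Ici_sdiff_left] at hslope
  have hkey : 0 ≤ d t - δ t * d 0 := by
    refine ge_of_tendsto hslope ?_
    filter_upwards [self_mem_nhdsWithin] with s hs
    have hspos : 0 < s := hs
    have hs0' : (0 : ℝ) ≤ s := hspos.le
    have hf0 : f 0 = 0 := by simp [hf, hδ0]
    have hfs : 0 ≤ f s := by
      have := hsub s t hs0' ht
      simp [hf]; linarith
    rw [slope_def_field]
    have : f s / s ≥ 0 := div_nonneg hfs hs0'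
    simpa [hf0] using this
  linarith
end

section
/- Let δ : [0,∞) → [0,1] and d : [0,∞) → ℝ be such that for every t ≥ 0 the function δ has (one-sided, within [0,∞)) derivative d(t) at t, d is continuous on [0,∞), d(t) ≤ 0 for all t ≥ 0, δ(0) = 1, and δ(t+s) ≥ δ(t)·δ(s) for all s, t ≥ 0. Then 1 − δ(t) ≤ |d(0)|·t for every t ≥ 0. (Lemma 2.3, second inequality.) -/
/-- Lemma 2.3, second inequality: with `δ : [0,∞) → [0,1]`, derivative `d` continuous and
nonpositive on `[0,∞)`, `δ 0 = 1` and log sub-additivity, one has `1 - δ t ≤ |d 0| * t`. -/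
theorem stmt_1 (δ d : ℝ → ℝ)
    (hrange : ∀ t : ℝ, 0 ≤ t → δ t ∈ Set.Icc (0 : ℝ) 1)
    (hderiv : ∀ t : ℝ, 0 ≤ t → HasDerivWithinAt δ (d t) (Set.Ici 0) t)
    (hdcont : ContinuousOn d (Set.Ici 0))
    (hdneg : ∀ t : ℝ, 0 ≤ t → d t ≤ 0)
    (hδ0 : δ 0 = 1)
    (hsub : ∀ s t : ℝ, 0 ≤ s → 0 ≤ t → δ (t + s) ≥ δ t * δ s) :
    ∀ t : ℝ, 0 ≤ t → 1 - δ t ≤ |d 0| * t := by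
  -- Step 1: d 0 ≤ d t for all t ≥ 0.
  have key : ∀ t : ℝ, 0 ≤ t → d 0 ≤ d t := by
    intro t ht
    set g : ℝ → ℝ := fun s => δ (t + s) - δ t * δ s with hg
    have hg0 : g 0 = 0 := by simp [hg, hδ0]
    have hgd : HasDerivWithinAt g (d t - δ t * d 0) (Set.Ici 0) 0 := by
      have h1 : HasDerivWithinAt (fun s : ℝ => δ (t + s)) (d t * 1) (Set.Ici 0) 0 := by
        have hc : HasDerivWithinAt (fun s : ℝ => t + s) 1 (Set.Ici 0) 0 := by
          simpa using ((hasDerivWithinAt_id (0:ℝ) (Set.Ici 0)).const_add t)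
        exact HasDerivWithinAt.comp 0 (by simpa using hderiv t ht) hc
          (fun s hs => by simpa using add_nonneg ht hs)
      have h2 : HasDerivWithinAt (fun s : ℝ => δ t * δ s) (δ t * d 0) (Set.Ici 0) 0 :=
        (hderiv 0 le_rfl).const_mul (δ t)
      have h3 := h1.sub h2
      rw [mul_one] at h3
      exact h3
    -- the derivative of g at 0 within Ici 0 is nonneg, since g ≥ 0 = g 0 on Ici 0
    have hpos : 0 ≤ d t - δ t * d 0 := by
      have htend := (hasDerivWithinAt_iff_tendsto_slope).1 hgd
      rw [show Set.Ici (0:ℝ) \ {0} = Set.Ioi 0 from Set.Ici_sdiff_left] at htend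
      refine le_of_tendsto_of_tendsto tendsto_const_nhds htend ?_
      filter_upwards [self_mem_nhdsWithin] with s hs
      have hs0' : (0:ℝ) < s := hs
      have hs0 : (0:ℝ) ≤ s := le_of_lt hs0'
      have hge : 0 ≤ g s := by
        have := hsub s t hs0 ht
        simpa [hg] using sub_nonneg.2 this
      have : slope g 0 s = g s / s := by simp [slope, hg0, div_eq_inv_mul]
      rw [this]
      positivity
    have hδt := hrange t ht
    have hmul : d 0 ≤ δ t * d 0 := by
      nlinarith [hdneg 0 le_rfl, hδt.1, hδt.2]
    linarith
  intro t ht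
  -- Step 2: h x = δ x - d 0 * x is monotone on Ici 0
  have hda : ∀ x : ℝ, 0 < x → HasDerivAt (fun x => δ x - d 0 * x) (d x - d 0) x := by
    intro x hx
    have hdd : HasDerivAt δ (d x) x := (hderiv x hx.le).hasDerivAt (Ici_mem_nhds hx)
    have h3 := hdd.sub ((hasDerivAt_id x).const_mul (d 0))
    rw [mul_one] at h3
    exact h3
  have hmono : MonotoneOn (fun x => δ x - d 0 * x) (Set.Ici (0:ℝ)) := by
    apply monotoneOn_of_deriv_nonneg (convex_Ici 0)
    · exact ContinuousOn.sub (fun x hx => (hderiv x hx).continuousWithinAt)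
        (Continuous.continuousOn (by continuity))
    · intro x hx
      rw [interior_Ici] at hx
      exact (hda x hx).differentiableAt.differentiableWithinAt
    · intro x hx
      rw [interior_Ici] at hx
      rw [(hda x hx).deriv]
      linarith [key x (le_of_lt hx)]
  have := hmono (Set.self_mem_Ici) (Set.mem_Ici.2 ht) ht
  have habs : |d 0| = -(d 0) := abs_of_nonpos (hdneg 0 le_rfl)
  simp only [hδ0] at this
  rw [habs]
  linarith
end

section
/- Let δ : [0,∞) → [0,1] and d : [0,∞) → ℝ be such that for every t ≥ 0 the function δ has (one-sided, within [0,∞)) derivative d(t) at t, d(t) ≤ 0 for all t ≥ 0, δ(0) = 1, and δ(t+s) ≥ δ(t)·δ(s) for all s, t ≥ 0. Then |d(t)| ≤ |d(0)|·δ(t) (and in particular |d(t)| ≤ |d(0)|) for every t ≥ 0. (Consequence of Lemma 2.3 used in the proof of Lemma 3.4, estimate (3.18).) -/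
/-- Consequence of Lemma 2.3 used in estimate (3.18): `|d t| ≤ |d 0| * δ t` and in
particular `|d t| ≤ |d 0|` for all `t ≥ 0`. -/
theorem stmt_2 (δ d : ℝ → ℝ)
    (hrange : ∀ t : ℝ, 0 ≤ t → δ t ∈ Set.Icc (0 : ℝ) 1)
    (hderiv : ∀ t : ℝ, 0 ≤ t → HasDerivWithinAt δ (d t) (Set.Ici 0) t)
    (hdneg : ∀ t : ℝ, 0 ≤ t → d t ≤ 0)
    (hδ0 : δ 0 = 1)
    (hsub : ∀ s t : ℝ, 0 ≤ s → 0 ≤ t → δ (t + s) ≥ δ t * δ s) :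
    ∀ t : ℝ, 0 ≤ t → |d t| ≤ |d 0| * δ t ∧ |d t| ≤ |d 0| := by
  intro t ht
  obtain ⟨h0, h1⟩ := hrange t ht
  have key : δ t * d 0 ≤ d t := by
    have hcomp : HasDerivWithinAt (fun s => δ (t + s)) (d t) (Set.Ici 0) 0 := by
      have hmap : Set.MapsTo (fun s : ℝ => t + s) (Set.Ici 0) (Set.Ici 0) := by
        intro x hx
        exact add_nonneg ht hx
      have := HasDerivWithinAt.comp (0 : ℝ) (by simpa using hderiv t ht)
        ((hasDerivWithinAt_id (0:ℝ) (Set.Ici 0)).const_add t) hmap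
      rw [mul_one] at this
      exact this
    have hg : HasDerivWithinAt (fun s => δ (t + s) - δ t * δ s)
        (d t - δ t * d 0) (Set.Ici 0) 0 := by
      have h2 := (hderiv 0 le_rfl).const_mul (δ t)
      exact hcomp.sub h2
    have htend := hasDerivWithinAt_iff_tendsto_slope.1 hg
    have hset : Set.Ici (0:ℝ) \ {0} = Set.Ioi 0 := by
      ext x
      simp only [Set.mem_diff, Set.mem_Ici, Set.mem_singleton_iff, Set.mem_Ioi]
      constructor
      · rintro ⟨hx, hne⟩; exact lt_of_le_of_ne hx (Ne.symm hne)
      · intro hx; exact ⟨hx.le, ne_of_gt hx⟩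
    rw [hset] at htend
    have hpos : 0 ≤ d t - δ t * d 0 := by
      refine ge_of_tendsto htend ?_
      filter_upwards [self_mem_nhdsWithin] with s hs
      have hs' : (0:ℝ) < s := hs
      have hnum : 0 ≤ δ (t + s) - δ t * δ s := sub_nonneg.2 (hsub s t hs'.le ht)
      have : slope (fun s => δ (t + s) - δ t * δ s) 0 s
          = (δ (t + s) - δ t * δ s) / s := by
        simp [slope_def_field, hδ0]
      rw [this]
      positivity
    linarith
  have hd0 : d 0 ≤ 0 := hdneg 0 le_rfl
  have hdt : d t ≤ 0 := hdneg t ht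
  have habs0 : |d 0| = -d 0 := abs_of_nonpos hd0
  have habst : |d t| = -d t := abs_of_nonpos hdt
  constructor
  · rw [habs0, habst]
    nlinarith
  · rw [habs0, habst]
    nlinarith
end

section
/- Let A < B, r ≥ 0, C ≥ 0, c > 0, and let s : ℝ → ℝ satisfy s(y) ≥ c for all y ∈ (A,B). Let u : ℝ → ℝ be continuous on [A,B], twice differentiable on (A,B) with continuous second derivative there, satisfying (1/2)·s(y)·u''(y) = r·u(y) for all y ∈ (A,B), and |u(A)| ≤ C, |u(B)| ≤ C. Then for every y ∈ (A,B): |u(y)| ≤ C, |u''(y)| ≤ 2rC/c, and |u'(y)| ≤ 2C/(B−A) + (2rC/c)·(B−A); in particular |u'(y)| + |u''(y)| ≤ K·(1+r) for a constant K depending only on C, c, A, B. (Uniform C² estimate, linear in r, established in the proof of Lemma 2.5.) -/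
/-- Uniform C² estimate, linear in `r`, from the proof of Lemma 2.5: for a solution of
`(1/2) s u'' = r u` on `(A,B)` with `s ≥ c > 0` and boundary bounds `|u(A)|,|u(B)| ≤ C`,
one has `|u| ≤ C`, `|u''| ≤ 2rC/c`, `|u'| ≤ 2C/(B-A) + (2rC/c)(B-A)` on `(A,B)`; in
particular `|u'| + |u''| ≤ K(1+r)` with `K` depending only on `C, c, A, B`. -/
theorem stmt_9 (A B r C c : ℝ) (hAB : A < B) (hr : 0 ≤ r) (hC : 0 ≤ C) (hc : 0 < c)
    (s : ℝ → ℝ) (hs : ∀ y ∈ Set.Ioo A B, c ≤ s y)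
    (u u' u'' : ℝ → ℝ)
    (hu_cont : ContinuousOn u (Set.Icc A B))
    (hu' : ∀ y ∈ Set.Ioo A B, HasDerivAt u (u' y) y)
    (hu'' : ∀ y ∈ Set.Ioo A B, HasDerivAt u' (u'' y) y)
    (hu''_cont : ContinuousOn u'' (Set.Ioo A B))
    (heq : ∀ y ∈ Set.Ioo A B, (1 / 2) * s y * u'' y = r * u y)
    (hA : |u A| ≤ C) (hB : |u B| ≤ C) :
    (∀ y ∈ Set.Ioo A B,
      |u y| ≤ C ∧ |u'' y| ≤ 2 * r * C / c ∧
      |u' y| ≤ 2 * C / (B - A) + (2 * r * C / c) * (B - A)) ∧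
    (∀ y ∈ Set.Ioo A B,
      |u' y| + |u'' y| ≤ (2 * C / (B - A) + (2 * C / c) * (B - A) + 2 * C / c) * (1 + r)) := by
  have hBA : 0 < B - A := sub_pos.mpr hAB
  -- the equation solved for u''
  have hcs : ∀ y ∈ Set.Ioo A B, 0 < s y := fun y hy => lt_of_lt_of_le hc (hs y hy)
  have heq' : ∀ y ∈ Set.Ioo A B, u'' y = 2 * r * u y / s y := by
    intro y hy
    have h := heq y hy
    have hsy : s y ≠ 0 := (hcs y hy).ne'
    field_simp
    linarith
  -- u * u'' ≥ 0 on (A,B)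
  have huu'' : ∀ y ∈ Set.Ioo A B, 0 ≤ u y * u'' y := by
    intro y hy
    rw [heq' y hy]
    have hsy := hcs y hy
    have : u y * (2 * r * u y / s y) = 2 * r * (u y) ^ 2 / s y := by ring
    rw [this]
    positivity
  -- v = u² is convex on [A,B]
  have hIoo : interior (Set.Icc A B) = Set.Ioo A B := interior_Icc
  have hconv : ConvexOn ℝ (Set.Icc A B) (fun y => (u y) ^ 2) := by
    apply convexOn_of_hasDerivWithinAt2_nonneg (convex_Icc A B)
      (f' := fun y => 2 * u y * u' y) (f'' := fun y => 2 * ((u' y) ^ 2 + u y * u'' y))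
    · exact hu_cont.pow 2
    · intro x hx
      rw [hIoo] at hx
      have h : HasDerivAt (fun y => (u y) ^ 2) (2 * u x * u' x) x := by
        have := (hu' x hx).pow 2
        exact this.congr_deriv (by norm_num)
      exact h.hasDerivWithinAt
    · intro x hx
      rw [hIoo] at hx
      have h : HasDerivAt (fun y => 2 * u y * u' y) (2 * ((u' x) ^ 2 + u x * u'' x)) x := by
        have := (((hu' x hx).const_mul 2).mul (hu'' x hx))
        exact this.congr_deriv (by ring)
      exact h.hasDerivWithinAt
    · intro x hx
      rw [hIoo] at hx
      have h1 := huu'' x hx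
      have h2 : (0:ℝ) ≤ (u' x) ^ 2 := sq_nonneg _
      linarith
  -- maximum principle: |u y| ≤ C on [A,B]
  have hmax : ∀ y ∈ Set.Icc A B, |u y| ≤ C := by
    intro y hy
    have h := hconv.le_max_of_mem_Icc (Set.left_mem_Icc.mpr hAB.le)
      (Set.right_mem_Icc.mpr hAB.le) hy
    have hA2 : (u A) ^ 2 ≤ C ^ 2 := by
      rw [← sq_abs]; exact pow_le_pow_left₀ (abs_nonneg _) hA 2
    have hB2 : (u B) ^ 2 ≤ C ^ 2 := by
      rw [← sq_abs]; exact pow_le_pow_left₀ (abs_nonneg _) hB 2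
    have hsq : (u y) ^ 2 ≤ C ^ 2 := le_trans h (max_le hA2 hB2)
    rw [abs_le]
    constructor <;> nlinarith [sq_nonneg (u y + C), sq_nonneg (u y - C)]
  -- bound on u''
  have hmax'' : ∀ y ∈ Set.Ioo A B, |u'' y| ≤ 2 * r * C / c := by
    intro y hy
    rw [heq' y hy, abs_div]
    have hsy := hcs y hy
    rw [abs_of_pos hsy, abs_mul, abs_mul, abs_of_nonneg (by norm_num : (0:ℝ) ≤ 2),
      abs_of_nonneg hr]
    have h1 : 2 * r * |u y| ≤ 2 * r * C := by
      have := hmax y (Set.mem_Icc_of_Ioo hy)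
      nlinarith
    have step1 : 2 * r * |u y| / s y ≤ 2 * r * C / s y := (div_le_div_iff_of_pos_right hsy).mpr h1
    have step2 : 2 * r * C / s y ≤ 2 * r * C / c :=
      div_le_div_of_nonneg_left (by positivity) hc (hs y hy)
    linarith
  -- MVT: there is ξ with u' ξ = slope
  obtain ⟨ξ, hξ, hξs⟩ := exists_hasDerivAt_eq_slope u u' hAB hu_cont hu'
  have hξbound : |u' ξ| ≤ 2 * C / (B - A) := by
    rw [hξs, abs_div, abs_of_pos hBA]
    gcongr
    calc |u B - u A| ≤ |u B| + |u A| := abs_sub _ _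
      _ ≤ 2 * C := by linarith
  -- bound on u'
  have hmax' : ∀ y ∈ Set.Ioo A B, |u' y| ≤ 2 * C / (B - A) + (2 * r * C / c) * (B - A) := by
    intro y hy
    have hdiff : |u' y - u' ξ| ≤ (2 * r * C / c) * (B - A) := by
      rcases lt_trichotomy y ξ with h | h | h
      · have hsub : Set.Icc y ξ ⊆ Set.Ioo A B := Set.Icc_subset_Ioo hy.1 hξ.2
        obtain ⟨η, hη, hηs⟩ := exists_hasDerivAt_eq_slope u' u'' h
          (fun z hz => (hu'' z (hsub hz)).continuousAt.continuousWithinAt)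
          (fun z hz => hu'' z (hsub (Set.mem_Icc_of_Ioo hz)))
        have hηmem : η ∈ Set.Ioo A B := hsub (Set.mem_Icc_of_Ioo hη)
        have : u' ξ - u' y = u'' η * (ξ - y) := by
          have hne : ξ - y ≠ 0 := by linarith
          field_simp at hηs
          linarith [hηs]
        have h1 : |u' y - u' ξ| = |u'' η| * |ξ - y| := by
          rw [← abs_mul, ← this, abs_sub_comm]
        rw [h1]
        have h2 := hmax'' η hηmem
        have h3 : |ξ - y| ≤ B - A := by
          rw [abs_of_pos (by linarith)]
          have := hy.1; have := hξ.2; linarith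
        exact mul_le_mul h2 h3 (abs_nonneg _) (by positivity)
      · rw [h, sub_self, abs_zero]; positivity
      · have hsub : Set.Icc ξ y ⊆ Set.Ioo A B := Set.Icc_subset_Ioo hξ.1 hy.2
        obtain ⟨η, hη, hηs⟩ := exists_hasDerivAt_eq_slope u' u'' h
          (fun z hz => (hu'' z (hsub hz)).continuousAt.continuousWithinAt)
          (fun z hz => hu'' z (hsub (Set.mem_Icc_of_Ioo hz)))
        have hηmem : η ∈ Set.Ioo A B := hsub (Set.mem_Icc_of_Ioo hη)
        have : u' y - u' ξ = u'' η * (y - ξ) := by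
          have hne : y - ξ ≠ 0 := by linarith
          field_simp at hηs
          linarith [hηs]
        have h1 : |u' y - u' ξ| = |u'' η| * |y - ξ| := by
          rw [← abs_mul, ← this]
        rw [h1]
        have h2 := hmax'' η hηmem
        have h3 : |y - ξ| ≤ B - A := by
          rw [abs_of_pos (by linarith)]
          have := hξ.1; have := hy.2; linarith
        exact mul_le_mul h2 h3 (abs_nonneg _) (by positivity)
    calc |u' y| = |u' ξ + (u' y - u' ξ)| := by ring_nf
      _ ≤ |u' ξ| + |u' y - u' ξ| := abs_add_le _ _
      _ ≤ 2 * C / (B - A) + (2 * r * C / c) * (B - A) := add_le_add hξbound hdiff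
  refine ⟨fun y hy => ⟨hmax y (Set.mem_Icc_of_Ioo hy), hmax'' y hy, hmax' y hy⟩, ?_⟩
  intro y hy
  have h1 := hmax' y hy
  have h2 := hmax'' y hy
  have k1 : (0:ℝ) ≤ 2 * C / (B - A) := by positivity
  have k2 : (0:ℝ) ≤ 2 * C / c := by positivity
  have e1 : 2 * r * C / c = r * (2 * C / c) := by ring
  nlinarith [mul_nonneg k1 hr, mul_nonneg (mul_nonneg k2 hBA.le) hr]
end
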